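/- Let K be a fine, δ-hyperbolic graph without global cut point. For every point ξ in the Gromov boundary ∂K and every vertex v of K, there exists a geodesic ray from v converging to ξ. -/

import Mathlib

/-- A graph is fine if for every `L` and every edge `e`, there are only finitely many
circuits (cycles) of length at most `L` containing `e`. -/
def Fine {V : Type*} (G : SimpleGraph V) : Prop :=
  ∀ (L : ℕ) (x y : V), G.Adj x y →
    {p : G.Walk x x | p.IsCycle ∧ s(x, y) ∈ p.edges ∧ p.length ≤ L}.Finite

/-- A graph is `δ`-hyperbolic: geodesic triangles are `δ`-thin. -/
def HypGraph {V : Type*} (G : SimpleGraph V) (δ : ℕ) : Prop :=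
  ∀ {x y z : V} (p : G.Walk x y) (q : G.Walk y z) (r : G.Walk x z),
    p.length = G.dist x y → q.length = G.dist y z → r.length = G.dist x z →
    ∀ w ∈ r.support, ∃ u, (u ∈ p.support ∨ u ∈ q.support) ∧ G.dist w u ≤ δ

/-- A geodesic ray in a graph: consecutive vertices are adjacent and the
parametrisation is isometric. -/
def GeodRay {V : Type*} (G : SimpleGraph V) (ρ : ℕ → V) : Prop :=
  (∀ k, G.Adj (ρ k) (ρ (k + 1))) ∧ ∀ m n : ℕ, m ≤ n → G.dist (ρ m) (ρ n) = n - m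

/-- Twice the Gromov product `(x·y)_o`. -/
noncomputable def gp2 {V : Type*} (G : SimpleGraph V) (o x y : V) : ℤ :=
  (G.dist o x : ℤ) + G.dist o y - G.dist x y

/-- A sequence of vertices converges to a point of the Gromov boundary if its Gromov
products tend to infinity. -/
def ConvInf {V : Type*} (G : SimpleGraph V) (o : V) (u : ℕ → V) : Prop :=
  ∀ N : ℤ, ∃ M : ℕ, ∀ i j, M ≤ i → M ≤ j → N ≤ gp2 G o (u i) (u j)

/-- Two sequences converge to the same boundary point: mixed Gromov products tend to
infinity. -/
def SameBdry {V : Type*} (G : SimpleGraph V) (o : V) (u w : ℕ → V) : Prop :=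
  ∀ N : ℤ, ∃ M : ℕ, ∀ i j, M ≤ i → M ≤ j → N ≤ gp2 G o (u i) (w j)


namespace VisibAux

open SimpleGraph

variable {V : Type*} {G : SimpleGraph V}

/-- Walk along a function with adjacent consecutive values. -/
def funWalk (G : SimpleGraph V) (f : ℕ → V) :
    ∀ L : ℕ, (∀ t, t < L → G.Adj (f t) (f (t + 1))) → G.Walk (f 0) (f L)
  | 0, _ => Walk.nil
  | (L + 1), h =>
    (funWalk G f L (fun t ht => ht.trans (Nat.lt_succ_self L) |> h t)).concat
      (h L (Nat.lt_succ_self L))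

lemma funWalk_length (f : ℕ → V) (L : ℕ) (h : ∀ t, t < L → G.Adj (f t) (f (t + 1))) :
    (funWalk G f L h).length = L := by
  induction L with
  | zero => rfl
  | succ L ih => simp [funWalk, Walk.length_concat, ih]

lemma funWalk_support (f : ℕ → V) (L : ℕ) (h : ∀ t, t < L → G.Adj (f t) (f (t + 1))) :
    ∀ x ∈ (funWalk G f L h).support, ∃ t, t ≤ L ∧ x = f t := by
  induction L with
  | zero =>
    intro x hx
    simp only [funWalk, Walk.support_nil, List.mem_singleton] at hx
    exact ⟨0, le_rfl, hx⟩
  | succ L ih =>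
    intro x hx
    simp only [funWalk, Walk.support_concat, List.concat_eq_append, List.mem_append,
      List.mem_singleton] at hx
    rcases hx with hx | hx
    · obtain ⟨t, ht, rfl⟩ := ih _ x hx
      exact ⟨t, ht.trans (Nat.le_succ L), rfl⟩
    · exact ⟨L + 1, le_rfl, hx⟩

/-- Walk between two `getVert` positions of a walk. -/
lemma exists_walk_getVert {v y : V} (p : G.Walk v y) {s t : ℕ} (hst : s ≤ t)
    (ht : t ≤ p.length) :
    ∃ q : G.Walk (p.getVert s) (p.getVert t), q.length = t - s ∧
      ∀ x ∈ q.support, ∃ r, s ≤ r ∧ r ≤ t ∧ x = p.getVert r := by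
  have hadj : ∀ r, r < t - s → G.Adj (p.getVert (s + r)) (p.getVert (s + (r + 1))) := by
    intro r hr
    have h1 : s + r < p.length := by omega
    have h2 := p.adj_getVert_succ h1
    have h3 : s + (r + 1) = s + r + 1 := by omega
    rw [h3]
    exact h2
  have hend : s + (t - s) = t := by omega
  refine ⟨(funWalk G (fun r => p.getVert (s + r)) (t - s) hadj).copy (by simp) (by rw [hend]),
    ?_, ?_⟩
  · rw [Walk.length_copy, funWalk_length]
  · intro x hx
    rw [Walk.support_copy] at hx
    obtain ⟨r, hr, rfl⟩ := funWalk_support _ _ hadj x hx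
    exact ⟨s + r, by omega, by omega, rfl⟩

lemma dist_getVert_of_geodesic (hcon : G.Connected) {v y : V} (p : G.Walk v y)
    (hp : p.length = G.dist v y) {t : ℕ} (ht : t ≤ p.length) :
    G.dist v (p.getVert t) = t := by
  obtain ⟨q1, hq1, -⟩ := exists_walk_getVert p (Nat.zero_le t) ht
  obtain ⟨q2, hq2, -⟩ := exists_walk_getVert p ht le_rfl
  have h1 : G.dist v (p.getVert t) ≤ t := by
    have := SimpleGraph.dist_le (q1.copy (p.getVert_zero) rfl)
    simpa [hq1] using this
  have h2 : G.dist (p.getVert t) y ≤ p.length - t := by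
    have := SimpleGraph.dist_le (q2.copy rfl (p.getVert_length))
    simpa [hq2] using this
  have h3 := hcon.dist_triangle (u := v) (v := p.getVert t) (w := y)
  omega

lemma dist_getVert_getVert_of_geodesic (hcon : G.Connected) {v y : V} (p : G.Walk v y)
    (hp : p.length = G.dist v y) {s t : ℕ} (hst : s ≤ t) (ht : t ≤ p.length) :
    G.dist (p.getVert s) (p.getVert t) = t - s := by
  obtain ⟨q, hq, -⟩ := exists_walk_getVert p hst ht
  have h1 : G.dist (p.getVert s) (p.getVert t) ≤ t - s := hq ▸ SimpleGraph.dist_le q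
  have h2 := dist_getVert_of_geodesic hcon p hp (hst.trans ht)
  have h3 := dist_getVert_of_geodesic hcon p hp ht
  have h4 := hcon.dist_triangle (u := v) (v := p.getVert s) (w := p.getVert t)
  omega

/-- A point on a geodesic splits the distance. -/
lemma dist_split_of_geodesic (hcon : G.Connected) {x y : V} (q : G.Walk x y)
    (hq : q.length = G.dist x y) {z : V} (hz : z ∈ q.support) :
    G.dist x z + G.dist z y = G.dist x y := by
  obtain ⟨t, rfl, ht⟩ := Walk.mem_support_iff_exists_getVert.mp hz
  obtain ⟨q1, hq1, -⟩ := exists_walk_getVert q (Nat.zero_le t) ht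
  obtain ⟨q2, hq2, -⟩ := exists_walk_getVert q ht le_rfl
  have h1 : G.dist x (q.getVert t) ≤ t := by
    have := SimpleGraph.dist_le (q1.copy (q.getVert_zero) rfl)
    simpa [hq1] using this
  have h2 : G.dist (q.getVert t) y ≤ q.length - t := by
    have := SimpleGraph.dist_le (q2.copy rfl (q.getVert_length))
    simpa [hq2] using this
  have h3 := hcon.dist_triangle (u := x) (v := q.getVert t) (w := y)
  omega

/-- Any support point of a walk is within its length of the start. -/
lemma dist_start_le_of_mem_support {a b x : V} (c : G.Walk a b) (hx : x ∈ c.support) :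
    G.dist a x ≤ c.length := by
  classical
  exact le_trans (SimpleGraph.dist_le (c.takeUntil x hx)) (Walk.length_takeUntil_le c hx)

/-- Comparison of two geodesics from `v` with large Gromov product: the point at
parameter `ν` on the first is `δ`-close to a point at comparable parameter on the second. -/
lemma khl {δ : ℕ} (hcon : G.Connected) (hhyp : HypGraph G δ) {v a b : V}
    (p : G.Walk v a) (q : G.Walk v b)
    (hp : p.length = G.dist v a) (hq : q.length = G.dist v b)
    {ν : ℕ} (hν : ν ≤ p.length) (hgp : 2 * ((ν : ℤ) + δ + 1) ≤ gp2 G v a b) :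
    ∃ m, m ≤ q.length ∧ G.dist (p.getVert ν) (q.getVert m) ≤ δ ∧ ν ≤ m + δ ∧ m ≤ ν + δ := by
  obtain ⟨r, hr⟩ := hcon.exists_walk_length_eq_dist b a
  have hmem : p.getVert ν ∈ p.support :=
    Walk.mem_support_iff_exists_getVert.mpr ⟨ν, rfl, hν⟩
  obtain ⟨z, hz, hdz⟩ := hhyp q r p hq hr hp (p.getVert ν) hmem
  have hdv : G.dist v (p.getVert ν) = ν := dist_getVert_of_geodesic hcon p hp hν
  rcases hz with hz | hz
  · obtain ⟨m, hm, hmle⟩ := Walk.mem_support_iff_exists_getVert.mp hz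
    subst hm
    have hdm : G.dist v (q.getVert m) = m := dist_getVert_of_geodesic hcon q hq hmle
    have t1 := hcon.dist_triangle (u := v) (v := p.getVert ν) (w := q.getVert m)
    have t2 := hcon.dist_triangle (u := v) (v := q.getVert m) (w := p.getVert ν)
    have hcomm : G.dist (q.getVert m) (p.getVert ν) = G.dist (p.getVert ν) (q.getVert m) :=
      SimpleGraph.dist_comm
    exact ⟨m, hmle, hdz, by omega, by omega⟩
  · exfalso
    have hsplit := dist_split_of_geodesic hcon r hr hz
    have t1 := hcon.dist_triangle (u := v) (v := z) (w := a)
    have t2 := hcon.dist_triangle (u := v) (v := z) (w := b)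
    have t3 := hcon.dist_triangle (u := v) (v := p.getVert ν) (w := z)
    have hc1 : G.dist z b = G.dist b z := SimpleGraph.dist_comm
    have hc2 : G.dist a b = G.dist b a := SimpleGraph.dist_comm
    unfold gp2 at hgp
    omega

/-- Key fineness lemma: the set of possible next vertices after a common geodesic prefix
value is finite. -/
lemma kfl {δ : ℕ} (hcon : G.Connected) (hfine : Fine G) (hhyp : HypGraph G δ)
    {v : V} {u : ℕ → V} (γ : ∀ i : ℕ, G.Walk v (u i))
    (hγ : ∀ i, (γ i).length = G.dist v (u i))
    {T : Set ℕ} (hTne : T.Nonempty) {n : ℕ} {x0 : V}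
    (hagree : ∀ i ∈ T, (γ i).getVert n = x0)
    (hgp : ∀ i ∈ T, ∀ j ∈ T, 2 * ((n : ℤ) + 2 * δ + 2) ≤ gp2 G v (u i) (u j)) :
    {y | ∃ i ∈ T, (γ i).getVert (n + 1) = y}.Finite := by
  classical
  have hlen : ∀ i ∈ T, n + 2 * δ + 2 ≤ (γ i).length := by
    intro i hi
    have h1 := hgp i hi i hi
    unfold gp2 at h1
    rw [SimpleGraph.dist_self] at h1
    have h2 := hγ i
    omega
  obtain ⟨i₀, hi₀⟩ := hTne
  have hβlen : n + 2 * δ + 2 ≤ (γ i₀).length := hlen i₀ hi₀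
  have hβn : (γ i₀).getVert n = x0 := hagree i₀ hi₀
  have hadjstar : G.Adj ((γ i₀).getVert (n + 1)) x0 := by
    have h := (γ i₀).adj_getVert_succ (i := n) (by omega)
    rw [hβn] at h
    exact h.symm
  have hdx0 : G.dist v x0 = n := by
    rw [← hβn]; exact dist_getVert_of_geodesic hcon (γ i₀) (hγ i₀) (by omega)
  have hdbn1 : G.dist v ((γ i₀).getVert (n + 1)) = n + 1 :=
    dist_getVert_of_geodesic hcon (γ i₀) (hγ i₀) (by omega)
  have hcycfin := hfine (4 * δ + 2) ((γ i₀).getVert (n + 1)) x0 hadjstar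
  have hsub : {y | ∃ i ∈ T, (γ i).getVert (n + 1) = y} ⊆
      insert ((γ i₀).getVert (n + 1))
        (⋃ C ∈ {p : G.Walk ((γ i₀).getVert (n + 1)) ((γ i₀).getVert (n + 1)) |
            p.IsCycle ∧ s((γ i₀).getVert (n + 1), x0) ∈ p.edges ∧ p.length ≤ 4 * δ + 2},
          {y | C.edges[1]? = some s(x0, y)}) := by
    rintro y ⟨i, hi, hy⟩
    by_cases hybn : y = (γ i₀).getVert (n + 1)
    · exact hybn ▸ Set.mem_insert _ _
    refine Set.mem_insert_iff.mpr (Or.inr ?_)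
    have hleni := hlen i hi
    have hgp' : 2 * (((n + 1 + δ : ℕ) : ℤ) + δ + 1) ≤ gp2 G v (u i) (u i₀) := by
      have h := hgp i hi i₀ hi₀
      push_cast
      push_cast at h
      omega
    obtain ⟨m, hmle, hdaz, hm1, hm2⟩ := khl hcon hhyp (γ i) (γ i₀) (hγ i) (hγ i₀)
      (ν := n + 1 + δ) (by omega) hgp'
    have hm1' : n + 1 ≤ m := by omega
    obtain ⟨c, hc⟩ := hcon.exists_walk_length_eq_dist ((γ i).getVert (n + 1 + δ))
      ((γ i₀).getVert m)
    have hclen : c.length ≤ δ := by rw [hc]; exact hdaz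
    obtain ⟨q₁, hq₁len, hq₁sup⟩ := exists_walk_getVert (γ i) (s := n + 1) (t := n + 1 + δ)
      (by omega) (by omega)
    obtain ⟨q₂, hq₂len, hq₂sup⟩ := exists_walk_getVert (γ i₀) (s := n + 1) (t := m)
      hm1' (by omega)
    set Q' : G.Walk y ((γ i₀).getVert (n + 1)) :=
      ((q₁.append (c.append q₂.reverse)).copy hy rfl) with hQ'def
    have hQ'sup : ∀ w ∈ Q'.support, n + 1 ≤ G.dist v w := by
      intro w hw
      rw [hQ'def, Walk.support_copy, Walk.mem_support_append_iff] at hw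
      rcases hw with hw | hw
      · obtain ⟨r, hr1, hr2, rfl⟩ := hq₁sup w hw
        rw [dist_getVert_of_geodesic hcon (γ i) (hγ i) (by omega)]
        omega
      · rw [Walk.mem_support_append_iff] at hw
        rcases hw with hw | hw
        · have hdaw : G.dist ((γ i).getVert (n + 1 + δ)) w ≤ δ :=
            le_trans (dist_start_le_of_mem_support c hw) hclen
          have hda : G.dist v ((γ i).getVert (n + 1 + δ)) = n + 1 + δ :=
            dist_getVert_of_geodesic hcon (γ i) (hγ i) (by omega)
          have t1 := hcon.dist_triangle (u := v) (v := w) (w := (γ i).getVert (n + 1 + δ))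
          have hcomm : G.dist w ((γ i).getVert (n + 1 + δ)) =
              G.dist ((γ i).getVert (n + 1 + δ)) w := SimpleGraph.dist_comm
          have t2 := hcon.dist_triangle (u := v) (v := (γ i).getVert (n + 1 + δ)) (w := w)
          omega
        · rw [Walk.support_reverse, List.mem_reverse] at hw
          obtain ⟨r, hr1, hr2, rfl⟩ := hq₂sup w hw
          rw [dist_getVert_of_geodesic hcon (γ i₀) (hγ i₀) (by omega)]
          omega
    have hx0not : x0 ∉ Q'.support := fun hx => by have := hQ'sup x0 hx; omega
    have hadj1 : G.Adj x0 y := by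
      have h := (γ i).adj_getVert_succ (i := n) (by omega)
      rw [hagree i hi, hy] at h
      exact h
    have hPpath : (Walk.cons hadj1 Q'.bypass).IsPath :=
      Walk.IsPath.cons Q'.bypass_isPath (fun hx => hx0not (Q'.support_bypass_subset hx))
    have hestar : s((γ i₀).getVert (n + 1), x0) ∉ (Walk.cons hadj1 Q'.bypass).edges := by
      intro hmem
      rw [Walk.edges_cons] at hmem
      rcases List.mem_cons.mp hmem with h1 | h1
      · rcases Sym2.eq_iff.mp h1 with ⟨h2, h3⟩ | ⟨h2, h3⟩
        · rw [h2] at hdbn1; omega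
        · exact hybn h2.symm
      · exact hx0not (Q'.support_bypass_subset (Walk.snd_mem_support_of_mem_edges Q'.bypass h1))
    have hCcyc : (Walk.cons hadjstar (Walk.cons hadj1 Q'.bypass)).IsCycle :=
      (Walk.cons_isCycle_iff _ hadjstar).mpr ⟨hPpath, hestar⟩
    have hClen : (Walk.cons hadjstar (Walk.cons hadj1 Q'.bypass)).length ≤ 4 * δ + 2 := by
      have h1 := Q'.length_bypass_le
      have h2 : Q'.length = δ + c.length + (m - (n + 1)) := by
        rw [hQ'def, Walk.length_copy, Walk.length_append, Walk.length_append,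
          Walk.length_reverse, hq₁len, hq₂len]
        omega
      simp only [Walk.length_cons]
      omega
    have hCe : s((γ i₀).getVert (n + 1), x0) ∈
        (Walk.cons hadjstar (Walk.cons hadj1 Q'.bypass)).edges := by
      rw [Walk.edges_cons]; exact List.mem_cons_self
    have hCe1 : (Walk.cons hadjstar (Walk.cons hadj1 Q'.bypass)).edges[1]? =
        some s(x0, y) := by
      rw [Walk.edges_cons, Walk.edges_cons]
      simp
    exact Set.mem_biUnion ⟨hCcyc, hCe, hClen⟩ hCe1
  refine Set.Finite.subset (Set.Finite.insert _ (Set.Finite.biUnion hcycfin ?_)) hsub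
  intro C hC
  refine Set.Subsingleton.finite ?_
  intro y1 h1 y2 h2
  have h3 : some s(x0, y1) = some s(x0, y2) := by
    rw [← h1, ← h2]
  exact Sym2.congr_right.mp (Option.some.inj h3)

end VisibAux

/-- Visibility: in a fine hyperbolic connected graph without global cut point, every
boundary point is the limit of a geodesic ray from any given vertex. -/
theorem stmt7 {V : Type*} (G : SimpleGraph V) (δ : ℕ) (hcon : G.Connected)
    (hfine : Fine G) (hhyp : HypGraph G δ)
    (hnocut : ∀ v : V, (SimpleGraph.induce {u : V | u ≠ v} G).Connected)
    (v : V) (u : ℕ → V) (hu : ConvInf G v u) :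
    ∃ ρ : ℕ → V, GeodRay G ρ ∧ ρ 0 = v ∧ SameBdry G v ρ u := by
  classical
  obtain ⟨γ, hγ⟩ : ∃ γ : ∀ i : ℕ, G.Walk v (u i), ∀ i, (γ i).length = G.dist v (u i) :=
    ⟨fun i => (hcon.exists_walk_length_eq_dist v (u i)).choose,
      fun i => (hcon.exists_walk_length_eq_dist v (u i)).choose_spec⟩
  choose M hMspec using fun n : ℕ => hu (2 * ((n : ℤ) + 2 * δ + 2))
  set U := Filter.hyperfilter ℕ with hUdef
  have hcof : ∀ c : ℕ, {i : ℕ | c ≤ i} ∈ U := by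
    intro c
    have h1 : ({i : ℕ | i < c} : Set ℕ).Finite := Set.finite_Iio c
    have h2 := Filter.compl_mem_hyperfilter_of_finite h1
    have h3 : {i : ℕ | i < c}ᶜ = {i : ℕ | c ≤ i} := by ext i; simp [not_lt]
    rwa [h3] at h2
  have hlen : ∀ n i, M n ≤ i → n + 2 * δ + 2 ≤ (γ i).length := by
    intro n i hi
    have h1 := hMspec n i i hi hi
    unfold gp2 at h1
    rw [SimpleGraph.dist_self] at h1
    have h2 := hγ i
    omega
  have key : ∀ (n : ℕ) (x : V) (A : Set ℕ), A ∈ U → (∀ i ∈ A, (γ i).getVert n = x) →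
      (∀ i ∈ A, M n ≤ i) →
      ∃ (x' : V) (A' : Set ℕ), A' ∈ U ∧ (∀ i ∈ A', (γ i).getVert (n + 1) = x') ∧
        (∀ i ∈ A', M (n + 1) ≤ i) ∧ A' ⊆ A := by
    intro n x A hAU hag hAM
    have hfinvals : {y | ∃ i ∈ A, (γ i).getVert (n + 1) = y}.Finite :=
      VisibAux.kfl hcon hfine hhyp γ hγ (U.nonempty_of_mem hAU) hag
        (fun i hi j hj => hMspec n i j (hAM i hi) (hAM j hj))
    have hcover : A ⊆ ⋃ y ∈ {y | ∃ i ∈ A, (γ i).getVert (n + 1) = y},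
        {i | i ∈ A ∧ (γ i).getVert (n + 1) = y} := by
      intro i hi
      exact Set.mem_biUnion ⟨i, hi, rfl⟩ ⟨hi, rfl⟩
    have hUnion : (⋃ y ∈ {y | ∃ i ∈ A, (γ i).getVert (n + 1) = y},
        {i | i ∈ A ∧ (γ i).getVert (n + 1) = y}) ∈ U := Filter.mem_of_superset hAU hcover
    obtain ⟨y, hyval, hyU⟩ := (Ultrafilter.finite_biUnion_mem_iff hfinvals).mp hUnion
    refine ⟨y, {i | i ∈ A ∧ (γ i).getVert (n + 1) = y} ∩ {i | M (n + 1) ≤ i},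
      Filter.inter_mem hyU (hcof _), ?_, ?_, ?_⟩
    · rintro i ⟨⟨-, h⟩, -⟩; exact h
    · rintro i ⟨-, h⟩; exact h
    · rintro i ⟨⟨h, -⟩, -⟩; exact h
  choose xf Af hAfU hAfag hAfM hAfsub using key
  let F : ∀ n : ℕ, Σ' (x : V) (A : Set ℕ),
      A ∈ U ∧ (∀ i ∈ A, (γ i).getVert n = x) ∧ (∀ i ∈ A, M n ≤ i) := fun n =>
    Nat.rec ⟨v, {i | M 0 ≤ i}, hcof (M 0), fun i _ => (γ i).getVert_zero, fun i hi => hi⟩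
      (fun k s => ⟨xf k s.1 s.2.1 s.2.2.1 s.2.2.2.1 s.2.2.2.2,
        Af k s.1 s.2.1 s.2.2.1 s.2.2.2.1 s.2.2.2.2,
        hAfU k s.1 s.2.1 s.2.2.1 s.2.2.2.1 s.2.2.2.2,
        hAfag k s.1 s.2.1 s.2.2.1 s.2.2.2.1 s.2.2.2.2,
        hAfM k s.1 s.2.1 s.2.2.1 s.2.2.2.1 s.2.2.2.2⟩) n
  have hsub : ∀ n : ℕ, (F (n + 1)).2.1 ⊆ (F n).2.1 := fun n =>
    hAfsub n (F n).1 (F n).2.1 (F n).2.2.1 (F n).2.2.2.1 (F n).2.2.2.2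
  have hmono : ∀ m n : ℕ, m ≤ n → (F n).2.1 ⊆ (F m).2.1 := by
    intro m n hmn
    induction hmn with
    | refl => exact fun _ h => h
    | step hmn ih => exact fun i hi => ih (hsub _ hi)
  have hmemA : ∀ n, (F n).2.1 ∈ U := fun n => (F n).2.2.1
  have hagA : ∀ n, ∀ i ∈ (F n).2.1, (γ i).getVert n = (F n).1 := fun n => (F n).2.2.2.1
  have hMA : ∀ n, ∀ i ∈ (F n).2.1, M n ≤ i := fun n => (F n).2.2.2.2
  have hpick : ∀ n c : ℕ, ∃ i, i ∈ (F n).2.1 ∧ c ≤ i := by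
    intro n c
    obtain ⟨i, hi⟩ := Ultrafilter.nonempty_of_mem (Filter.inter_mem (hmemA n) (hcof c))
    exact ⟨i, hi.1, hi.2⟩
  refine ⟨fun n => (F n).1, ⟨?_, ?_⟩, rfl, ?_⟩
  · -- adjacency
    intro k
    obtain ⟨i, hi, -⟩ := hpick (k + 1) 0
    have hik : i ∈ (F k).2.1 := hsub k hi
    have h1 : (γ i).getVert k = (F k).1 := hagA k i hik
    have h2 : (γ i).getVert (k + 1) = (F (k + 1)).1 := hagA (k + 1) i hi
    have h3 : k + 2 * δ + 2 ≤ (γ i).length := hlen k i (hMA k i hik)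
    have h4 := (γ i).adj_getVert_succ (i := k) (by omega)
    rw [h1, h2] at h4
    exact h4
  · -- geodesic parametrisation
    intro m n hmn
    show G.dist ((F m).1) ((F n).1) = n - m
    obtain ⟨i, hi, -⟩ := hpick n 0
    have him : i ∈ (F m).2.1 := hmono m n hmn hi
    have h3 : n + 2 * δ + 2 ≤ (γ i).length := hlen n i (hMA n i hi)
    have h1 : (γ i).getVert m = (F m).1 := hagA m i him
    have h2 : (γ i).getVert n = (F n).1 := hagA n i hi
    rw [← h1, ← h2]
    exact VisibAux.dist_getVert_getVert_of_geodesic hcon (γ i) (hγ i) hmn (by omega)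
  · -- convergence to the same boundary point
    intro N
    set n₀ : ℕ := N.toNat + δ + 1 with hn₀
    obtain ⟨M₀, hM₀⟩ := hu (2 * ((n₀ : ℤ) + δ + 1))
    refine ⟨max M₀ n₀, ?_⟩
    intro n j hn hj
    show (N : ℤ) ≤ gp2 G v ((F n).1) (u j)
    obtain ⟨i, hiA, hiM₀⟩ := hpick n M₀
    have hjM₀ : M₀ ≤ j := le_trans (le_max_left _ _) hj
    have hn₀n : n₀ ≤ n := le_trans (le_max_right _ _) hn
    have hgpij := hM₀ i j hiM₀ hjM₀
    have hdi : n₀ + δ + 1 ≤ (γ i).length := by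
      have h1 := hM₀ i i hiM₀ hiM₀
      unfold gp2 at h1
      rw [SimpleGraph.dist_self] at h1
      have h2 := hγ i
      omega
    have hleni : n + 2 * δ + 2 ≤ (γ i).length := hlen n i (hMA n i hiA)
    have hρn : (γ i).getVert n = (F n).1 := hagA n i hiA
    have hρn₀ : (γ i).getVert n₀ = (F n₀).1 := hagA n₀ i (hmono n₀ n hn₀n hiA)
    obtain ⟨m, hmle, hdz, hm1, hm2⟩ := VisibAux.khl hcon hhyp (γ i) (γ j) (hγ i) (hγ j)
      (ν := n₀) (by omega) hgpij
    have f1 : G.dist v ((F n).1) = n := by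
      rw [← hρn]; exact VisibAux.dist_getVert_of_geodesic hcon (γ i) (hγ i) (by omega)
    have f3 : G.dist ((F n₀).1) ((F n).1) = n - n₀ := by
      rw [← hρn, ← hρn₀]
      exact VisibAux.dist_getVert_getVert_of_geodesic hcon (γ i) (hγ i) hn₀n (by omega)
    have f4 : G.dist ((γ j).getVert m) (u j) = (γ j).length - m := by
      have h := VisibAux.dist_getVert_getVert_of_geodesic hcon (γ j) (hγ j) hmle le_rfl
      rwa [(γ j).getVert_length] at h
    have f5 : G.dist ((F n₀).1) ((γ j).getVert m) ≤ δ := by rw [← hρn₀]; exact hdz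
    have t1 := hcon.dist_triangle (u := (F n).1) (v := (F n₀).1) (w := u j)
    have t2 := hcon.dist_triangle (u := (F n₀).1) (v := (γ j).getVert m) (w := u j)
    have hcm : G.dist ((F n).1) ((F n₀).1) = G.dist ((F n₀).1) ((F n).1) :=
      SimpleGraph.dist_comm
    have hdj : (γ j).length = G.dist v (u j) := hγ j
    have hN : (N : ℤ) ≤ 2 * (n₀ : ℤ) - 2 * δ := by
      rw [hn₀]
      push_cast
      omega
    unfold gp2
    omega
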